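/- arXiv:1806.09299 — 4 statements merged into one kernel-verified Lean document; each statement's English description precedes it below -/
import Mathlib

section
/- For every nonempty admissible index k, one has ζ(k†) = ζ(k). -/
open scoped ENNReal


/-- The multiple zeta value `ζ(k₁,…,k_r) = ∑_{0<n₁<⋯<n_r} 1/(n₁^{k₁}⋯n_r^{k_r})`. -/
noncomputable def mzv (k : List ℕ) : ℝ :=
  ∑' n : {n : Fin k.length → ℕ // StrictMono n ∧ ∀ i, 0 < n i},
    ∏ i, ((n.1 i : ℝ) ^ k.get i)⁻¹

/-- `S(k) = {k₁, k₁+k₂, …, k₁+⋯+k_{r-1}}`, the set of proper partial sums of an index. -/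
def partialSums (k : List ℕ) : Finset ℕ :=
  ((List.range (k.length - 1)).map fun j => (k.take (j + 1)).sum).toFinset

/-- The index of weight `n` whose set of proper partial sums is `S ⊆ {1,…,n-1}`. -/
def indexOfSet (n : ℕ) (S : Finset ℕ) : List ℕ :=
  let l := Finset.sort (insert n S) (· ≤ ·)
  List.zipWith (· - ·) l (0 :: l)

/-- Hoffman's dual `k^∨`: the unique index of weight `n = wt(k)` with
`S(k^∨) = {1,…,n-1} \ S(k)`. -/
def hdual (k : List ℕ) : List ℕ :=
  indexOfSet k.sum (Finset.Ioo 0 k.sum \ partialSums k)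

/-- `P` adds `1` to the last entry of a nonempty index. -/
def lastInc (k : List ℕ) : List ℕ := k.dropLast ++ [k.getLast! + 1]

/-- `P⁻¹` subtracts `1` from the last entry of a nonempty index. -/
def lastDec (k : List ℕ) : List ℕ := k.dropLast ++ [k.getLast! - 1]

/-- The dual index: for an admissible `k = ({1}^{a₁-1},b₁+1,…,{1}^{a_s-1},b_s+1)`,
`k† = ({1}^{b_s-1},a_s+1,…,{1}^{b₁-1},a₁+1)`; equivalently `k† = P(R((P⁻¹k)^∨))`
where `R` reverses. -/
def dagger (k : List ℕ) : List ℕ := lastInc ((hdual (lastDec k)).reverse)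



/-- Connector `m! n! / (m+n)! = 1 / C(m+n, m)` as an extended nonneg real. -/
noncomputable def Cc (m n : ℕ) : ℝ≥0∞ := (((m + n).choose m : ℕ) : ℝ≥0∞)⁻¹

lemma Cc_pos_ne (m n : ℕ) : (((m + n).choose m : ℕ) : ℝ≥0∞) ≠ 0 ∧ (((m + n).choose m : ℕ) : ℝ≥0∞) ≠ ⊤ := by
  refine ⟨?_, ENNReal.natCast_ne_top _⟩
  exact Nat.cast_ne_zero.mpr (Nat.choose_pos (Nat.le_add_right m n)).ne'

lemma Cc_ne_top (m n : ℕ) : Cc m n ≠ ⊤ := by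
  simp [Cc, ENNReal.inv_ne_top, (Cc_pos_ne m n).1]

lemma Cc_zero_right (m : ℕ) : Cc m 0 = 1 := by simp [Cc]

lemma Cc_zero_left (n : ℕ) : Cc 0 n = 1 := by simp [Cc]

lemma Cc_symm (m n : ℕ) : Cc m n = Cc n m := by
  unfold Cc
  rw [Nat.add_comm n m]
  congr 2
  rw [← Nat.choose_symm (Nat.le_add_right m n)]
  congr 1
  omega

/-- The nested-sum functional: `Bfun k low w = ∑_{low<n₁<⋯<n_r} (∏ nᵢ^{-kᵢ}) w(n_r)`. -/
noncomputable def Bfun : List ℕ → ℕ → (ℕ → ℝ≥0∞) → ℝ≥0∞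
  | [], low, w => w low
  | x :: k, low, w => ∑' a : {a : ℕ // low < a}, ((a.1 : ℝ≥0∞) ^ x)⁻¹ * Bfun k a.1 w

lemma Bfun_mul (k : List ℕ) (c : ℝ≥0∞) : ∀ (low : ℕ) (w : ℕ → ℝ≥0∞),
    Bfun k low (fun n => c * w n) = c * Bfun k low w := by
  induction k with
  | nil => intro low w; rfl
  | cons x k ih =>
    intro low w
    simp only [Bfun]
    rw [← ENNReal.tsum_mul_left]
    exact tsum_congr fun a => by rw [ih]; ring

lemma Bfun_tsum (k : List ℕ) {ι : Type} (c : ι → ℝ≥0∞) : ∀ (low : ℕ) (G : ι → ℕ → ℝ≥0∞),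
    ∑' j, c j * Bfun k low (G j) = Bfun k low (fun n => ∑' j, c j * G j n) := by
  induction k with
  | nil => intro low G; rfl
  | cons x k ih =>
    intro low G
    simp only [Bfun]
    calc ∑' j, c j * ∑' a : {a : ℕ // low < a}, ((a.1 : ℝ≥0∞) ^ x)⁻¹ * Bfun k a.1 (G j)
        = ∑' (j) (a : {a : ℕ // low < a}), c j * (((a.1 : ℝ≥0∞) ^ x)⁻¹ * Bfun k a.1 (G j)) :=
          tsum_congr fun j => ENNReal.tsum_mul_left.symm
      _ = ∑' (a : {a : ℕ // low < a}) (j), c j * (((a.1 : ℝ≥0∞) ^ x)⁻¹ * Bfun k a.1 (G j)) :=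
          ENNReal.tsum_comm
      _ = ∑' a : {a : ℕ // low < a}, ((a.1 : ℝ≥0∞) ^ x)⁻¹ * Bfun k a.1 (fun n => ∑' j, c j * G j n) := by
          refine tsum_congr fun a => ?_
          rw [← ih a.1 G, ← ENNReal.tsum_mul_left]
          exact tsum_congr fun j => by ring

lemma Bfun_swap (k l : List ℕ) (F : ℕ → ℕ → ℝ≥0∞) : ∀ (low low' : ℕ),
    Bfun k low (fun m => Bfun l low' (F m)) = Bfun l low' (fun n => Bfun k low (fun m => F m n)) := by
  induction k with
  | nil => intro low low'; rfl
  | cons x k ih =>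
    intro low low'
    simp only [Bfun]
    calc ∑' a : {a : ℕ // low < a}, ((a.1 : ℝ≥0∞) ^ x)⁻¹ * Bfun k a.1 (fun m => Bfun l low' (F m))
        = ∑' a : {a : ℕ // low < a}, ((a.1 : ℝ≥0∞) ^ x)⁻¹ *
            Bfun l low' (fun n => Bfun k a.1 (fun m => F m n)) := by
          exact tsum_congr fun a => by rw [ih]
      _ = Bfun l low' (fun n => ∑' a : {a : ℕ // low < a}, ((a.1 : ℝ≥0∞) ^ x)⁻¹ *
            Bfun k a.1 (fun m => F m n)) := by
          exact Bfun_tsum l (fun a : {a : ℕ // low < a} => ((a.1 : ℝ≥0∞) ^ x)⁻¹) low'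
            (fun a n => Bfun k a.1 (fun m => F m n))

lemma Bfun_snoc (k : List ℕ) (y : ℕ) : ∀ (low : ℕ) (w : ℕ → ℝ≥0∞),
    Bfun (k ++ [y]) low w
      = Bfun k low (fun n => ∑' b : {b : ℕ // n < b}, ((b.1 : ℝ≥0∞) ^ y)⁻¹ * w b.1) := by
  induction k with
  | nil => intro low w; rfl
  | cons x k ih =>
    intro low w
    simp only [List.cons_append, Bfun]
    exact tsum_congr fun a => congrArg _ (ih a.1 w)
lemma choose_symm_add (m c : ℕ) : (m + c).choose c = (m + c).choose m := by
  have h := Nat.choose_symm (n := m + c) (k := m) (Nat.le_add_right m c)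
  simpa [Nat.add_sub_cancel_left] using h

lemma choose_id (m b : ℕ) (hb : 1 ≤ b) :
    Cc m (b - 1) = Cc m b + (m : ℝ≥0∞) * ((b : ℝ≥0∞))⁻¹ * Cc m b := by
  have hnat : (m + b) * ((m + (b - 1)).choose m) = ((m + b).choose m) * b := by
    have h1 := Nat.add_one_mul_choose_eq (m + b - 1) (b - 1)
    have e1 : m + b - 1 + 1 = m + b := by omega
    have e2 : b - 1 + 1 = b := by omega
    rw [e1, e2] at h1
    have e3 : (m + b - 1).choose (b - 1) = (m + (b - 1)).choose m := by
      rw [show m + b - 1 = m + (b - 1) by omega]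
      exact choose_symm_add m (b - 1)
    have e4 : (m + b).choose b = (m + b).choose m :=
      choose_symm_add m b
    rw [e3, e4] at h1
    exact h1
  set x : ℕ := (m + (b - 1)).choose m with hx
  set y : ℕ := (m + b).choose m with hy
  have hx0 : (x : ℝ≥0∞) ≠ 0 := (Cc_pos_ne m (b - 1)).1
  have hxT : (x : ℝ≥0∞) ≠ ⊤ := (Cc_pos_ne m (b - 1)).2
  have hy0 : (y : ℝ≥0∞) ≠ 0 := (Cc_pos_ne m b).1
  have hyT : (y : ℝ≥0∞) ≠ ⊤ := (Cc_pos_ne m b).2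
  have hb0 : (b : ℝ≥0∞) ≠ 0 := Nat.cast_ne_zero.mpr (by omega)
  have hbT : (b : ℝ≥0∞) ≠ ⊤ := ENNReal.natCast_ne_top b
  have hmb0 : ((m : ℝ≥0∞) + b) ≠ 0 := by
    intro h; apply hb0; exact le_antisymm (h ▸ le_add_self) zero_le
  have hmbT : ((m : ℝ≥0∞) + b) ≠ ⊤ := by
    simp [ENNReal.add_ne_top, ENNReal.natCast_ne_top]
  have hcast : ((m : ℝ≥0∞) + b) * x = (y : ℝ≥0∞) * b := by
    exact_mod_cast hnat
  show (x : ℝ≥0∞)⁻¹ = (y : ℝ≥0∞)⁻¹ + (m : ℝ≥0∞) * ((b : ℝ≥0∞))⁻¹ * (y : ℝ≥0∞)⁻¹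
  have step1 : (y : ℝ≥0∞)⁻¹ + (m : ℝ≥0∞) * ((b : ℝ≥0∞))⁻¹ * (y : ℝ≥0∞)⁻¹
      = (((m : ℝ≥0∞) + b) * (b : ℝ≥0∞)⁻¹) * (y : ℝ≥0∞)⁻¹ := by
    have h1 : ((b : ℝ≥0∞) * (b : ℝ≥0∞)⁻¹) = 1 := ENNReal.mul_inv_cancel hb0 hbT
    calc (y : ℝ≥0∞)⁻¹ + (m : ℝ≥0∞) * ((b : ℝ≥0∞))⁻¹ * (y : ℝ≥0∞)⁻¹
        = ((b : ℝ≥0∞) * (b : ℝ≥0∞)⁻¹) * (y : ℝ≥0∞)⁻¹ + (m : ℝ≥0∞) * ((b : ℝ≥0∞))⁻¹ * (y : ℝ≥0∞)⁻¹ := by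
          rw [h1, one_mul]
      _ = (((m : ℝ≥0∞) + b) * (b : ℝ≥0∞)⁻¹) * (y : ℝ≥0∞)⁻¹ := by ring
  rw [step1]
  have step2 : (((m : ℝ≥0∞) + b) * (b : ℝ≥0∞)⁻¹) * (y : ℝ≥0∞)⁻¹
      = ((m : ℝ≥0∞) + b) * ((y : ℝ≥0∞) * b)⁻¹ := by
    rw [ENNReal.mul_inv (Or.inl hy0) (Or.inl hyT)]
    ring
  rw [step2, ← hcast, ENNReal.mul_inv (Or.inl hmb0) (Or.inl hmbT), ← mul_assoc,
    ENNReal.mul_inv_cancel hmb0 hmbT, one_mul]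

lemma iInf_Cc (m n : ℕ) (hm : 1 ≤ m) : (⨅ N : ℕ, Cc m (n + N)) = 0 := by
  refine le_antisymm ?_ zero_le
  have h : ∀ N : ℕ, Cc m (n + N) ≤ (((N : ℝ≥0∞)) + 1)⁻¹ := by
    intro N
    have hc : N + 1 ≤ (m + (n + N)).choose m := by
      have e : (m + (n + N)).choose m = (m + (n + N)).choose (n + N) :=
        (choose_symm_add m (n + N)).symm
      have h1 : (n + N + 1).choose (n + N) ≤ (m + (n + N)).choose (n + N) :=
        Nat.choose_le_choose _ (by omega)
      rw [Nat.choose_succ_self_right] at h1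
      omega
    have hcast : ((N : ℝ≥0∞) + 1) ≤ (((m + (n + N)).choose m : ℕ) : ℝ≥0∞) := by
      exact_mod_cast hc
    unfold Cc
    exact ENNReal.inv_le_inv.mpr hcast
  calc (⨅ N : ℕ, Cc m (n + N)) ≤ ⨅ N : ℕ, (((N : ℝ≥0∞)) + 1)⁻¹ :=
        le_iInf fun N => iInf_le_of_le N (h N)
    _ = 0 := by
        rw [← ENNReal.inv_iSup]
        have : (⨆ N : ℕ, ((N : ℝ≥0∞) + 1)) = ⊤ := by
          rw [eq_top_iff, ← ENNReal.iSup_natCast]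
          exact iSup_le fun N => le_iSup_of_le N (by simp)
        rw [this, ENNReal.inv_top]
/-- The subtype `{b // n < b}` is equivalent to `ℕ`. -/
def shiftEquiv (n : ℕ) : ℕ ≃ {b : ℕ // n < b} where
  toFun i := ⟨n + 1 + i, by omega⟩
  invFun b := b.1 - (n + 1)
  left_inv i := by simp
  right_inv b := by
    ext
    have := b.2
    simp only
    omega

lemma keyId (m n : ℕ) (hm : 1 ≤ m) :
    ∑' b : {b : ℕ // n < b}, ((b.1 : ℝ≥0∞))⁻¹ * Cc m b.1 = (m : ℝ≥0∞)⁻¹ * Cc m n := by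
  have hm0 : (m : ℝ≥0∞) ≠ 0 := Nat.cast_ne_zero.mpr (by omega)
  have hmT : (m : ℝ≥0∞) ≠ ⊤ := ENNReal.natCast_ne_top m
  set g : ℕ → ℝ≥0∞ := fun i => (((n + 1 + i : ℕ) : ℝ≥0∞))⁻¹ * Cc m (n + 1 + i) with hg
  have hS : ∑' b : {b : ℕ // n < b}, ((b.1 : ℝ≥0∞))⁻¹ * Cc m b.1 = ∑' i, g i :=
    ((shiftEquiv n).tsum_eq (fun b : {b : ℕ // n < b} => ((b.1 : ℝ≥0∞))⁻¹ * Cc m b.1)).symm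
  have hpartial : ∀ N : ℕ, (m : ℝ≥0∞) * (∑ i ∈ Finset.range N, g i) + Cc m (n + N) = Cc m n := by
    intro N
    induction N with
    | zero => simp
    | succ N ih =>
      rw [Finset.sum_range_succ, mul_add, add_assoc]
      have key : (m : ℝ≥0∞) * g N + Cc m (n + (N + 1)) = Cc m (n + N) := by
        have h1 := choose_id m (n + N + 1) (by omega)
        have e1 : n + N + 1 - 1 = n + N := by omega
        have e2 : n + 1 + N = n + N + 1 := by omega
        rw [e1] at h1
        rw [hg]
        simp only
        rw [e2, show n + (N + 1) = n + N + 1 by omega, h1]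
        ring
      rw [key, ih]
  have hmul : (m : ℝ≥0∞) * (∑' i, g i) = Cc m n := by
    rw [ENNReal.tsum_eq_iSup_nat, ENNReal.mul_iSup]
    have : ∀ N : ℕ, (m : ℝ≥0∞) * (∑ i ∈ Finset.range N, g i) = Cc m n - Cc m (n + N) :=
      fun N => ENNReal.eq_sub_of_add_eq (Cc_ne_top m (n + N)) (hpartial N)
    calc (⨆ N : ℕ, (m : ℝ≥0∞) * ∑ i ∈ Finset.range N, g i)
        = ⨆ N : ℕ, (Cc m n - Cc m (n + N)) := by exact iSup_congr this
      _ = Cc m n - ⨅ N : ℕ, Cc m (n + N) := (ENNReal.sub_iInf).symm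
      _ = Cc m n := by rw [iInf_Cc m n hm, tsub_zero]
  rw [hS, ← hmul, ← mul_assoc, ENNReal.inv_mul_cancel hm0 hmT, one_mul]

/-- The connected sum `Z(k; l)`. -/
noncomputable def Zfun (k l : List ℕ) : ℝ≥0∞ :=
  Bfun k 0 (fun m => Bfun l 0 (fun n => Cc m n))

lemma Zfun_symm (k l : List ℕ) : Zfun k l = Zfun l k := by
  unfold Zfun
  rw [Bfun_swap]
  congr 1
  funext n
  congr 1
  funext m
  exact Cc_symm m n

lemma T1 (k l : List ℕ) (x : ℕ) : Zfun (k ++ [x + 1]) l = Zfun (k ++ [x]) (l ++ [1]) := by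
  unfold Zfun
  rw [Bfun_snoc, Bfun_snoc]
  congr 1
  funext m
  refine tsum_congr fun a => ?_
  have ha1 : 1 ≤ a.1 := by have := a.2; omega
  have ha0 : (a.1 : ℝ≥0∞) ≠ 0 := Nat.cast_ne_zero.mpr (by omega)
  have haT : (a.1 : ℝ≥0∞) ≠ ⊤ := ENNReal.natCast_ne_top _
  have inner : Bfun (l ++ [1]) 0 (fun n => Cc a.1 n)
      = ((a.1 : ℝ≥0∞))⁻¹ * Bfun l 0 (fun n => Cc a.1 n) := by
    rw [Bfun_snoc, ← Bfun_mul]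
    congr 1
    funext n
    rw [← keyId a.1 n ha1]
    exact tsum_congr fun b => by rw [pow_one]
  rw [inner, pow_succ, ENNReal.mul_inv (Or.inl (by positivity)) (Or.inr ha0)]
  ring
lemma getLast!_eq (l : List ℕ) (h : l ≠ []) : l.getLast! = l.getLast h :=
  List.getLast!_of_getLast? (List.getLast?_eq_getLast h)

lemma getLast!_concat (l : List ℕ) (a : ℕ) : (l ++ [a]).getLast! = a := by
  rw [getLast!_eq _ (by simp)]
  exact List.getLast_concat ..

lemma getLast!_mem (l : List ℕ) (h : l ≠ []) : l.getLast! ∈ l := by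
  rw [getLast!_eq l h]; exact List.getLast_mem h

lemma decomp (l : List ℕ) (h : l ≠ []) : l.dropLast ++ [l.getLast!] = l := by
  rw [getLast!_eq l h]; exact List.dropLast_append_getLast h

lemma lastDec_eq (l : List ℕ) : lastDec l = l.dropLast ++ [l.getLast! - 1] := rfl
lemma lastInc_eq (l : List ℕ) : lastInc l = l.dropLast ++ [l.getLast! + 1] := rfl

lemma sum_decomp (l : List ℕ) (h : l ≠ []) : l.dropLast.sum + l.getLast! = l.sum := by
  conv_rhs => rw [← decomp l h]
  simp

/-- Transport recursion computing the dual index. -/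
def dualRec : List ℕ → List ℕ → List ℕ
  | [], l => l
  | x :: k, l =>
    if h2c : 2 ≤ (x :: k).getLast! then dualRec (lastDec (x :: k)) (l ++ [1])
    else dualRec (x :: k).dropLast (lastInc l)
  termination_by k _ => k.sum + k.length
  decreasing_by
  · have h1 : (lastDec (x :: k)).sum = (x :: k).dropLast.sum + ((x :: k).getLast! - 1) := by
      simp [lastDec_eq, List.sum_append]
    have h2 : (lastDec (x :: k)).length = (x :: k).dropLast.length + 1 := by
      simp [lastDec_eq]
    have h3 := sum_decomp (x :: k) (by simp)
    have h4 : (x :: k).dropLast.length + 1 = (x :: k).length := by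
      rw [List.length_dropLast]; simp
    omega
  · have h3 := sum_decomp (x :: k) (by simp)
    have h4 : (x :: k).dropLast.length + 1 = (x :: k).length := by
      rw [List.length_dropLast]; simp
    omega

lemma dualRec_nil (l : List ℕ) : dualRec [] l = l := by rw [dualRec]

lemma dualRec_cons_big (k l : List ℕ) (hk : k ≠ []) (h2 : 2 ≤ k.getLast!) :
    dualRec k l = dualRec (lastDec k) (l ++ [1]) := by
  obtain ⟨x, k', rfl⟩ := List.exists_cons_of_ne_nil hk
  rw [dualRec, dif_pos h2]

lemma dualRec_cons_small (k l : List ℕ) (hk : k ≠ []) (h2 : ¬ 2 ≤ k.getLast!) :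
    dualRec k l = dualRec k.dropLast (lastInc l) := by
  obtain ⟨x, k', rfl⟩ := List.exists_cons_of_ne_nil hk
  rw [dualRec, dif_neg h2]

theorem mainT (k l : List ℕ) (hk : ∀ a ∈ k, 1 ≤ a) (hl : ∀ a ∈ l, 1 ≤ a)
    (h : k = [] ∨ l ≠ [] ∨ 2 ≤ k.getLast!) :
    Zfun k l = Zfun [] (dualRec k l) := by
  rcases eq_or_ne k [] with rfl | hkne
  · rw [dualRec_nil]
  have hglk : 1 ≤ k.getLast! := hk _ (getLast!_mem k hkne)
  by_cases h2 : 2 ≤ k.getLast!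
  · -- big last entry
    have hdec : k.dropLast ++ [(k.getLast! - 2) + 1 + 1] = k := by
      rw [show k.getLast! - 2 + 1 + 1 = k.getLast! by omega]; exact decomp k hkne
    have step : Zfun k l = Zfun (lastDec k) (l ++ [1]) := by
      conv_lhs => rw [← hdec]
      rw [T1, lastDec_eq, show k.getLast! - 2 + 1 = k.getLast! - 1 by omega]
    rw [step, dualRec_cons_big k l hkne h2]
    refine mainT (lastDec k) (l ++ [1]) ?_ ?_ (Or.inr (Or.inl (by simp)))
    · intro a ha
      rw [lastDec_eq] at ha
      rcases List.mem_append.mp ha with ha | ha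
      · exact hk _ (List.dropLast_subset _ ha)
      · simp only [List.mem_singleton] at ha; omega
    · intro a ha
      rcases List.mem_append.mp ha with ha | ha
      · exact hl _ ha
      · simp at ha; omega
  · -- last entry equal to 1
    have hlne : l ≠ [] := by
      rcases h with h | h | h
      · exact absurd h hkne
      · exact h
      · exact absurd h h2
    have hg1 : k.getLast! = 1 := by omega
    have hgl : 1 ≤ l.getLast! := hl _ (getLast!_mem l hlne)
    have hldec : l.dropLast ++ [(l.getLast! - 1) + 1] = l := by
      rw [show l.getLast! - 1 + 1 = l.getLast! by omega]; exact decomp l hlne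
    have hkdec : k.dropLast ++ [1] = k := by
      rw [← hg1]; exact decomp k hkne
    have step : Zfun k l = Zfun k.dropLast (lastInc l) := by
      rw [Zfun_symm]
      conv_lhs => rw [← hldec, ← hkdec, ← T1]
      rw [lastInc_eq, show l.getLast! - 1 + 1 + 1 = l.getLast! + 1 by omega]
      exact Zfun_symm _ _
    rw [step, dualRec_cons_small k l hkne h2]
    refine mainT k.dropLast (lastInc l) ?_ ?_ (Or.inr (Or.inl (by simp [lastInc_eq])))
    · exact fun a ha => hk _ (List.dropLast_subset _ ha)
    · intro a ha
      rw [lastInc_eq] at ha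
      rcases List.mem_append.mp ha with ha | ha
      · exact hl _ (List.dropLast_subset _ ha)
      · simp at ha; omega
  termination_by k.sum + k.length
  decreasing_by
  · rw [lastDec_eq, List.sum_append, List.length_append]
    have := sum_decomp k hkne
    have h2' : k.dropLast.length + 1 = k.length := by
      rw [List.length_dropLast]; exact Nat.succ_pred_eq_of_pos (List.length_pos_iff.mpr hkne)
    simp only [List.sum_cons, List.sum_nil, List.length_cons, List.length_nil]
    omega
  · have := sum_decomp k hkne
    have h2' : k.dropLast.length + 1 = k.length := by
      rw [List.length_dropLast]; exact Nat.succ_pred_eq_of_pos (List.length_pos_iff.mpr hkne)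
    omega
/-- Last value of a tuple, with default `low` for the empty tuple. -/
def lastD (low : ℕ) : {r : ℕ} → (Fin r → ℕ) → ℕ
  | 0, _ => low
  | _ + 1, n => n (Fin.last _)

lemma lastD_cons (low a : ℕ) {r : ℕ} (t : Fin r → ℕ) :
    lastD low (Fin.cons a t : Fin (r + 1) → ℕ) = lastD a t := by
  cases r with
  | zero => rfl
  | succ r =>
    show (Fin.cons a t : Fin (r + 2) → ℕ) (Fin.last (r + 1)) = t (Fin.last r)
    rw [show Fin.last (r + 1) = (Fin.last r).succ from rfl, Fin.cons_succ]

lemma strictMono_cons_iff {r : ℕ} (low a : ℕ) (t : Fin r → ℕ) :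
    (StrictMono (Fin.cons a t : Fin (r + 1) → ℕ) ∧ ∀ i, low < (Fin.cons a t : Fin (r+1) → ℕ) i)
      ↔ (low < a ∧ StrictMono t ∧ ∀ i, a < t i) := by
  constructor
  · rintro ⟨hsm, hpos⟩
    refine ⟨by simpa using hpos 0, fun i j hij => ?_, fun i => ?_⟩
    · have := hsm (a := i.succ) (b := j.succ) (by simpa using hij)
      simpa using this
    · have := hsm (a := 0) (b := i.succ) (Fin.succ_pos i)
      simpa using this
  · rintro ⟨hla, hsm, hat⟩
    constructor
    · intro i j hij
      induction j using Fin.cases with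
      | zero => exact absurd hij (by simp)
      | succ j =>
        induction i using Fin.cases with
        | zero => simpa using hat j
        | succ i =>
          simp only [Fin.cons_succ]
          exact hsm (by simpa using hij)
    · intro i
      induction i using Fin.cases with
      | zero => simpa using hla
      | succ i => simp only [Fin.cons_succ]; exact hla.trans (hat i)

/-- Splitting off the first coordinate of an increasing tuple. -/
def consEquiv (r low : ℕ) :
    {n : Fin (r + 1) → ℕ // StrictMono n ∧ ∀ i, low < n i}
      ≃ Σ a : {a : ℕ // low < a}, {t : Fin r → ℕ // StrictMono t ∧ ∀ i, a.1 < t i} where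
  toFun n := ⟨⟨n.1 0, n.2.2 0⟩, ⟨Fin.tail n.1, by
    have h := n.2
    rw [← Fin.cons_self_tail n.1] at h
    exact ((strictMono_cons_iff low (n.1 0) (Fin.tail n.1)).mp h).2⟩⟩
  invFun p := ⟨Fin.cons p.1.1 p.2.1, by
    refine (strictMono_cons_iff low p.1.1 p.2.1).mpr ⟨p.1.2, p.2.2.1, p.2.2.2⟩⟩
  left_inv n := by
    ext : 1
    exact Fin.cons_self_tail n.1
  right_inv p := by
    obtain ⟨⟨a, ha⟩, t, ht⟩ := p
    rfl

lemma tsum_eq_B (k : List ℕ) : ∀ (low : ℕ) (w : ℕ → ℝ≥0∞),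
    ∑' n : {n : Fin k.length → ℕ // StrictMono n ∧ ∀ i, low < n i},
      (∏ i, ((n.1 i : ℝ≥0∞) ^ k.get i)⁻¹) * w (lastD low n.1) = Bfun k low w := by
  induction k with
  | nil =>
    intro low w
    have hU : ∀ b : {n : Fin ([] : List ℕ).length → ℕ // StrictMono n ∧ ∀ i, low < n i},
        b = ⟨fun i => i.elim0, fun i j h => (i.elim0 : _), fun i => i.elim0⟩ := by
      intro b; ext i; exact i.elim0
    rw [tsum_eq_single ⟨fun i => i.elim0, fun i j h => (i.elim0 : _), fun i => i.elim0⟩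
      (fun b hb => absurd (hU b) hb)]
    show (∏ i : Fin 0, _) * w low = Bfun [] low w
    rw [Finset.univ_eq_empty, Finset.prod_empty, one_mul]
    rfl
  | cons x k ih =>
    intro low w
    have e := (consEquiv k.length low).symm.tsum_eq
      (fun n : {n : Fin (k.length + 1) → ℕ // StrictMono n ∧ ∀ i, low < n i} =>
        (∏ i, ((n.1 i : ℝ≥0∞) ^ (x :: k).get i)⁻¹) * w (lastD low n.1))
    refine Eq.trans e.symm ?_
    rw [ENNReal.tsum_sigma']
    calc (∑' (a : {a : ℕ // low < a})
            (t : {t : Fin k.length → ℕ // StrictMono t ∧ ∀ i, a.1 < t i}),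
          (∏ i, ((((consEquiv k.length low).symm ⟨a, t⟩).1 i : ℝ≥0∞) ^ (x :: k).get i)⁻¹) *
            w (lastD low ((consEquiv k.length low).symm ⟨a, t⟩).1))
        = ∑' (a : {a : ℕ // low < a}), ((a.1 : ℝ≥0∞) ^ x)⁻¹ *
            ∑' (t : {t : Fin k.length → ℕ // StrictMono t ∧ ∀ i, a.1 < t i}),
              (∏ i, ((t.1 i : ℝ≥0∞) ^ k.get i)⁻¹) * w (lastD a.1 t.1) := by
          refine tsum_congr fun a => ?_
          rw [← ENNReal.tsum_mul_left]
          refine tsum_congr fun t => ?_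
          show (∏ i, (((Fin.cons a.1 t.1 : Fin (k.length + 1) → ℕ) i : ℝ≥0∞) ^
              (x :: k).get i)⁻¹) * w (lastD low (Fin.cons a.1 t.1 : Fin (k.length + 1) → ℕ))
            = ((a.1 : ℝ≥0∞) ^ x)⁻¹ * ((∏ i, ((t.1 i : ℝ≥0∞) ^ k.get i)⁻¹) * w (lastD a.1 t.1))
          rw [lastD_cons, Fin.prod_univ_succ]
          simp only [Fin.cons_zero, Fin.cons_succ, List.get, List.get_cons_zero, List.get_cons_succ']
          ring
      _ = ∑' (a : {a : ℕ // low < a}), ((a.1 : ℝ≥0∞) ^ x)⁻¹ * Bfun k a.1 w := by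
          exact tsum_congr fun a => by rw [ih a.1 w]
      _ = Bfun (x :: k) low w := rfl

lemma mzv_eq_B (k : List ℕ) : mzv k = (Bfun k 0 (fun _ => 1)).toReal := by
  rw [← tsum_eq_B k 0 (fun _ => 1)]
  unfold mzv
  have hne : ∀ n : {n : Fin k.length → ℕ // StrictMono n ∧ ∀ i, 0 < n i},
      (∏ i, ((n.1 i : ℝ≥0∞) ^ k.get i)⁻¹) * (1 : ℝ≥0∞) ≠ ⊤ := by
    intro n
    rw [mul_one]
    refine ENNReal.prod_ne_top fun i _ => ?_
    refine ENNReal.inv_ne_top.mpr ?_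
    have : (0 : ℕ) < n.1 i := n.2.2 i
    positivity
  rw [ENNReal.tsum_toReal_eq hne]
  refine tsum_congr fun n => ?_
  rw [mul_one, ENNReal.toReal_prod]
  refine Finset.prod_congr rfl fun i _ => ?_
  simp [ENNReal.toReal_inv, ENNReal.toReal_pow]

lemma Zfun_nil_right (k : List ℕ) : Zfun k [] = Bfun k 0 (fun _ => 1) := by
  unfold Zfun
  congr 1
  funext m
  show Cc m 0 = 1
  exact Cc_zero_right m

lemma mzv_eq_Z (k : List ℕ) : mzv k = (Zfun k []).toReal := by
  rw [mzv_eq_B, Zfun_nil_right]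
/-! ### Words over `{→, ↑}` encoding indices -/

/-- The word of an index: each part `x` contributes `→ ↑^(x-1)` (`false` = `→`). -/
def word (k : List ℕ) : List Bool := k.flatMap fun x => false :: List.replicate (x - 1) true

lemma word_nil : word [] = [] := rfl

lemma word_cons (x : ℕ) (k : List ℕ) :
    word (x :: k) = false :: (List.replicate (x - 1) true ++ word k) := by
  simp [word, List.flatMap_cons]

lemma word_append (k l : List ℕ) : word (k ++ l) = word k ++ word l := by
  simp [word, List.flatMap_append]

lemma word_singleton (x : ℕ) : word [x] = false :: List.replicate (x - 1) true := by
  simp [word_cons, word_nil]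

lemma word_length (k : List ℕ) (h : ∀ x ∈ k, 1 ≤ x) : (word k).length = k.sum := by
  induction k with
  | nil => rfl
  | cons x k ih =>
    rw [word_cons]
    simp only [List.length_cons, List.length_append, List.length_replicate, List.sum_cons]
    rw [ih (fun a ha => h a (List.mem_cons_of_mem x ha))]
    have := h x List.mem_cons_self
    omega

lemma word_append_one (l : List ℕ) : word (l ++ [1]) = word l ++ [false] := by
  rw [word_append, word_singleton]
  norm_num

lemma word_lastInc (l : List ℕ) (hne : l ≠ []) (hpos : ∀ x ∈ l, 1 ≤ x) :
    word (lastInc l) = word l ++ [true] := by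
  have hg : 1 ≤ l.getLast! := hpos _ (getLast!_mem l hne)
  conv_rhs => rw [← decomp l hne]
  rw [lastInc_eq, word_append, word_append, word_singleton, word_singleton]
  rw [show l.getLast! + 1 - 1 = (l.getLast! - 1) + 1 by omega, List.replicate_succ' ]
  simp

lemma word_lastDec (k : List ℕ) (hne : k ≠ []) (h2 : 2 ≤ k.getLast!) :
    word (lastDec k) ++ [true] = word k := by
  conv_rhs => rw [← decomp k hne]
  rw [lastDec_eq, word_append, word_append, word_singleton, word_singleton,
    show k.getLast! - 1 = (k.getLast! - 2) + 1 by omega, List.replicate_succ']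
  simp [List.append_assoc]

lemma word_dropLast_one (k : List ℕ) (hne : k ≠ []) (h1 : k.getLast! = 1) :
    word k.dropLast ++ [false] = word k := by
  conv_rhs => rw [← decomp k hne]
  rw [word_append, h1, word_singleton]
  norm_num

lemma word_head (k : List ℕ) : word k = [] ∨ (word k).head? = some false := by
  cases k with
  | nil => exact Or.inl rfl
  | cons x k => right; rw [word_cons]; rfl

lemma rep_cancel : ∀ (a : ℕ) (b : ℕ) (w₁ w₂ : List Bool), w₁.head? ≠ some true →
    w₂.head? ≠ some true →
    List.replicate a true ++ w₁ = List.replicate b true ++ w₂ → a = b ∧ w₁ = w₂ := by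
  intro a
  induction a with
  | zero =>
    intro b w₁ w₂ h1 h2 heq
    cases b with
    | zero => simpa using heq
    | succ b =>
      exfalso
      rw [List.replicate_succ, List.replicate_zero, List.nil_append] at heq
      apply h1
      rw [heq]
      rfl
  | succ a ih =>
    intro b w₁ w₂ h1 h2 heq
    cases b with
    | zero =>
      exfalso
      rw [List.replicate_succ, List.replicate_zero, List.nil_append] at heq
      apply h2
      rw [← heq]
      rfl
    | succ b =>
      rw [List.replicate_succ, List.replicate_succ] at heq
      simp only [List.cons_append, List.cons.injEq] at heq
      obtain ⟨ab, heq⟩ := ih b w₁ w₂ h1 h2 heq.2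
      exact ⟨by omega, heq⟩

lemma word_inj : ∀ (k₁ k₂ : List ℕ), (∀ x ∈ k₁, 1 ≤ x) → (∀ x ∈ k₂, 1 ≤ x) →
    word k₁ = word k₂ → k₁ = k₂ := by
  intro k₁
  induction k₁ with
  | nil =>
    intro k₂ _ _ h
    cases k₂ with
    | nil => rfl
    | cons y k₂ => rw [word_nil, word_cons] at h; exact absurd h.symm (by simp)
  | cons x k₁ ih =>
    intro k₂ h1 h2 h
    cases k₂ with
    | nil => rw [word_nil, word_cons] at h; exact absurd h (by simp)
    | cons y k₂ =>
      rw [word_cons, word_cons] at h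
      simp only [List.cons.injEq, true_and] at h
      have hh1 : (word k₁).head? ≠ some true := by
        rcases word_head k₁ with h' | h' <;> simp [h']
      have hh2 : (word k₂).head? ≠ some true := by
        rcases word_head k₂ with h' | h' <;> simp [h']
      obtain ⟨hab, htail⟩ := rep_cancel (x - 1) (y - 1) (word k₁) (word k₂) hh1 hh2 h
      have hx := h1 x List.mem_cons_self
      have hy := h2 y List.mem_cons_self
      have : x = y := by omega
      rw [this, ih k₂ (fun a ha => h1 a (List.mem_cons_of_mem x ha))
        (fun a ha => h2 a (List.mem_cons_of_mem y ha)) htail]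
lemma word_get (k : List ℕ) (hpos : ∀ x ∈ k, 1 ≤ x) :
    ∀ (i : ℕ) (h : i < (word k).length),
      ((word k)[i] = false ↔ ∃ j, j < k.length ∧ (k.take j).sum = i) := by
  induction k with
  | nil => intro i h; simp [word_nil] at h
  | cons x k ih =>
    have hx : 1 ≤ x := hpos x List.mem_cons_self
    have hk : ∀ a ∈ k, 1 ≤ a := fun a ha => hpos a (List.mem_cons_of_mem x ha)
    intro i h
    simp only [word_cons] at h ⊢
    simp only [List.length_cons, List.length_append, List.length_replicate] at h
    cases i with
    | zero =>
      refine iff_of_true ?_ ⟨0, by simp, rfl⟩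
      simp [word_cons]
    | succ i =>
      rw [List.getElem_cons_succ]
      by_cases hix : i < x - 1
      · rw [List.getElem_append_left (by simpa using hix), List.getElem_replicate]
        constructor
        · intro hfalse; exact absurd hfalse (by simp)
        · rintro ⟨j, hj, hsum⟩
          exfalso
          cases j with
          | zero => simp at hsum
          | succ j =>
            rw [List.take_succ_cons, List.sum_cons] at hsum
            omega
      · have hile : x - 1 ≤ i := by omega
        rw [List.getElem_append_right (by simpa using hile)]
        simp only [List.length_replicate]
        rw [ih hk (i - (x - 1)) (by omega)]
        constructor
        · rintro ⟨j, hj, hsum⟩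
          exact ⟨j + 1, by simpa using hj, by
            rw [List.take_succ_cons, List.sum_cons, hsum]; omega⟩
        · rintro ⟨j, hj, hsum⟩
          cases j with
          | zero => simp at hsum
          | succ j =>
            rw [List.take_succ_cons, List.sum_cons] at hsum
            exact ⟨j, by simpa using hj, by omega⟩

lemma exists_take_iff (k : List ℕ) (hne : k ≠ []) (i : ℕ) :
    (∃ j, j < k.length ∧ (k.take j).sum = i) ↔ (i = 0 ∨ i ∈ partialSums k) := by
  constructor
  · rintro ⟨j, hj, hsum⟩
    cases j with
    | zero => left; simpa using hsum.symm
    | succ j =>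
      right
      unfold partialSums
      rw [List.mem_toFinset, List.mem_map]
      exact ⟨j, by rw [List.mem_range]; omega, hsum⟩
  · rintro (rfl | hmem)
    · exact ⟨0, List.length_pos_iff.mpr hne, rfl⟩
    · unfold partialSums at hmem
      rw [List.mem_toFinset, List.mem_map] at hmem
      obtain ⟨j, hj, hsum⟩ := hmem
      rw [List.mem_range] at hj
      exact ⟨j + 1, by omega, hsum⟩
/-! ### Successive differences of a sorted list -/

lemma dz_cons (p a : ℕ) (l : List ℕ) :
    List.zipWith (· - ·) (a :: l) (p :: a :: l) = (a - p) :: List.zipWith (· - ·) l (a :: l) := rfl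

lemma dz_pos : ∀ (l : List ℕ) (p : ℕ), List.Chain (· < ·) p l →
    ∀ x ∈ List.zipWith (· - ·) l (p :: l), 1 ≤ x := by
  intro l
  induction l with
  | nil => intro p _ x hx; simp at hx
  | cons a l ih =>
    intro p hc x hx
    simp only [List.Chain] at hc
    rw [List.chain_cons] at hc
    rw [dz_cons, List.mem_cons] at hx
    rcases hx with rfl | hx
    · omega
    · exact ih a hc.2 x hx

lemma dz_len (l : List ℕ) (p : ℕ) :
    (List.zipWith (· - ·) l (p :: l)).length = l.length := by
  rw [List.length_zipWith]
  simp only [List.length_cons]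
  omega

lemma dz_sum : ∀ (l : List ℕ) (p : ℕ), List.Chain (· < ·) p l →
    (List.zipWith (· - ·) l (p :: l)).sum + p = l.getLastD p := by
  intro l
  induction l with
  | nil => intro p _; simp
  | cons a l ih =>
    intro p hc
    simp only [List.Chain] at hc
    rw [List.chain_cons] at hc
    rw [dz_cons, List.sum_cons, List.getLastD_cons]
    have := ih a hc.2
    omega

lemma dz_partial : ∀ (l : List ℕ) (p : ℕ), List.Chain (· < ·) p l →
    ((List.range (l.length - 1)).map fun j =>
      ((List.zipWith (· - ·) l (p :: l)).take (j + 1)).sum + p) = l.dropLast := by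
  intro l
  induction l with
  | nil => intro p _; simp
  | cons a l ih =>
    intro p hc
    simp only [List.Chain] at hc
    rw [List.chain_cons] at hc
    cases l with
    | nil => simp
    | cons b l' =>
      have hlen : (a :: b :: l').length - 1 = ((b :: l').length - 1) + 1 := by simp
      rw [hlen, List.range_succ_eq_map, List.map_cons, List.map_map]
      have h0 : ((List.zipWith (· - ·) (a :: b :: l') (p :: a :: b :: l')).take 1).sum + p = a := by
        rw [dz_cons]
        simp only [List.take_succ_cons, List.take_zero, List.sum_cons, List.sum_nil]
        have := hc.1
        omega
      rw [h0]
      have hmapeq : (List.map ((fun j => ((List.zipWith (· - ·) (a :: b :: l')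
            (p :: a :: b :: l')).take (j + 1)).sum + p) ∘ Nat.succ)
            (List.range ((b :: l').length - 1)))
          = (List.range ((b :: l').length - 1)).map fun j =>
              ((List.zipWith (· - ·) (b :: l') (a :: b :: l')).take (j + 1)).sum + a := by
        refine List.map_congr_left fun j _ => ?_
        show ((List.zipWith (· - ·) (a :: b :: l')
            (p :: a :: b :: l')).take (j + 1 + 1)).sum + p
          = ((List.zipWith (· - ·) (b :: l') (a :: b :: l')).take (j + 1)).sum + a
        rw [dz_cons]
        simp only [List.take_succ_cons, List.sum_cons]
        have := hc.1
        omega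
      rw [hmapeq, ih a hc.2, List.dropLast_cons₂]

/-! ### Properties of `indexOfSet` -/

lemma indexOfSet_spec (n : ℕ) (S : Finset ℕ) (hn : 1 ≤ n) (hS : S ⊆ Finset.Ioo 0 n) :
    (∀ x ∈ indexOfSet n S, 1 ≤ x) ∧ (indexOfSet n S).sum = n ∧ indexOfSet n S ≠ [] ∧
      partialSums (indexOfSet n S) = S := by
  classical
  set l := Finset.sort (insert n S) (· ≤ ·) with hl
  have hdef : indexOfSet n S = List.zipWith (· - ·) l (0 :: l) := rfl
  have hnS : n ∉ S := fun h => by have := Finset.mem_Ioo.mp (hS h); omega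
  have hlsorted : l.Pairwise (· < ·) := (Finset.sortedLT_sort _).pairwise
  have hpos : ∀ b ∈ l, 0 < b := by
    intro b hb
    simp only [hl, Finset.mem_sort] at hb
    rcases Finset.mem_insert.mp hb with rfl | hb
    · omega
    · exact (Finset.mem_Ioo.mp (hS hb)).1
  have hchain : List.Chain (· < ·) 0 l := by
    show List.IsChain (· < ·) (0 :: l)
    rw [List.isChain_iff_pairwise, List.pairwise_cons]
    exact ⟨hpos, hlsorted⟩
  have hconcat : l = Finset.sort S (· ≤ ·) ++ [n] := by
    refine (fun hp hs => List.Perm.eq_of_pairwise' (Finset.pairwise_sort _ _) hs hp) ?_ ?_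
    · refine ((Finset.sort_perm_toList _ (· ≤ ·)).trans ((Finset.toList_insert hnS).trans
        (List.Perm.cons n (Finset.sort_perm_toList S (· ≤ ·)).symm))).trans ?_
      exact (List.perm_append_singleton n _).symm
    · show List.Pairwise _ _
      rw [List.pairwise_append]
      refine ⟨Finset.pairwise_sort _ _, List.pairwise_singleton _ _, ?_⟩
      intro a ha b hb
      simp only [Finset.mem_sort] at ha
      rw [List.mem_singleton] at hb
      subst hb
      exact le_of_lt (Finset.mem_Ioo.mp (hS ha)).2
  have hlast : l.getLastD 0 = n := by
    rw [hconcat]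
    rw [List.getLastD_eq_getLast?, List.getLast?_concat]
    rfl
  have hdrop : l.dropLast = Finset.sort S (· ≤ ·) := by
    rw [hconcat, List.dropLast_concat]
  have hlne : l ≠ [] := by rw [hconcat]; simp
  refine ⟨by rw [hdef]; exact dz_pos l 0 hchain, ?_, ?_, ?_⟩
  · have := dz_sum l 0 hchain
    rw [hdef]
    omega
  · rw [hdef]
    intro hcon
    have := dz_len l 0
    rw [hcon] at this
    simp only [List.length_nil] at this
    exact hlne (List.length_eq_zero_iff.mp this.symm)
  · have hps := dz_partial l 0 hchain
    simp only [Nat.add_zero] at hps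
    unfold partialSums
    rw [hdef, dz_len, hps, hdrop, Finset.sort_toFinset]

lemma sum_pos_of_ne_nil (j : List ℕ) (hne : j ≠ []) (hpos : ∀ x ∈ j, 1 ≤ x) : 1 ≤ j.sum := by
  cases j with
  | nil => exact absurd rfl hne
  | cons a t =>
    have := hpos a List.mem_cons_self
    rw [List.sum_cons]
    omega

lemma hdual_spec (j : List ℕ) (hne : j ≠ []) (hpos : ∀ x ∈ j, 1 ≤ x) :
    (∀ x ∈ hdual j, 1 ≤ x) ∧ (hdual j).sum = j.sum ∧ hdual j ≠ [] ∧
      partialSums (hdual j) = Finset.Ioo 0 j.sum \ partialSums j :=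
  indexOfSet_spec j.sum _ (sum_pos_of_ne_nil j hne hpos) Finset.sdiff_subset
lemma word_reverse : ∀ (m : List ℕ), m ≠ [] → word m.reverse = false :: ((word m).tail).reverse := by
  intro m
  induction m with
  | nil => intro h; exact absurd rfl h
  | cons x m ih =>
    intro _
    cases m with
    | nil =>
      rw [show ([x] : List ℕ).reverse = [x] from rfl, word_singleton]
      simp [List.reverse_replicate]
    | cons y t =>
      have hmne : (y :: t) ≠ [] := by simp
      rw [List.reverse_cons, word_append, ih hmne, word_singleton]
      have hwm : word (y :: t) = false :: (word (y :: t)).tail := by rw [word_cons]; rfl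
      rw [word_cons x (y :: t)]
      show (false :: ((word (y :: t)).tail).reverse) ++ (false :: List.replicate (x - 1) true)
        = false :: (List.replicate (x - 1) true ++ word (y :: t)).reverse
      rw [List.reverse_append, List.reverse_replicate]
      conv_rhs => rw [hwm]
      rw [List.reverse_cons]
      simp [List.append_assoc]

lemma word_hdual (j : List ℕ) (hne : j ≠ []) (hpos : ∀ x ∈ j, 1 ≤ x) :
    word (hdual j) = false :: (List.map not (word j)).tail := by
  obtain ⟨hdpos, hdsum, hdne, hdps⟩ := hdual_spec j hne hpos
  have hn : 1 ≤ j.sum := sum_pos_of_ne_nil j hne hpos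
  have hwlenj : (word j).length = j.sum := word_length j hpos
  have hwlend : (word (hdual j)).length = j.sum := by rw [word_length _ hdpos, hdsum]
  refine List.ext_getElem ?_ ?_
  · rw [hwlend]
    simp only [List.length_cons, List.length_tail, List.length_map, hwlenj]
    omega
  · intro i h1 h2
    cases i with
    | zero =>
      rw [List.getElem_cons_zero]
      exact (word_get (hdual j) hdpos 0 h1).mpr ⟨0, List.length_pos_iff.mpr hdne, rfl⟩
    | succ i =>
      rw [List.getElem_cons_succ, List.getElem_tail, List.getElem_map]
      have hilt : i + 1 < j.sum := by rw [hwlend] at h1; exact h1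
      have hmemIoo : (i + 1) ∈ Finset.Ioo 0 j.sum := Finset.mem_Ioo.mpr ⟨by omega, hilt⟩
      have hjlt : i + 1 < (word j).length := by omega
      have key : ((word (hdual j))[i+1]'h1 = false) ↔ ¬ ((word j)[i+1]'hjlt = false) := by
        rw [word_get (hdual j) hdpos (i+1) h1, exists_take_iff (hdual j) hdne (i+1),
          word_get j hpos (i+1) hjlt, exists_take_iff j hne (i+1), hdps]
        rw [Finset.mem_sdiff]
        simp only [hmemIoo, true_and]
        tauto
      rcases Bool.eq_false_or_eq_true ((word j)[i+1]'hjlt) with hb | hb <;>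
        rcases Bool.eq_false_or_eq_true ((word (hdual j))[i+1]'h1) with hb' | hb' <;>
        simp_all

theorem dualRec_word (k l : List ℕ) (hk : ∀ x ∈ k, 1 ≤ x) (hl : ∀ x ∈ l, 1 ≤ x)
    (hlne : l ≠ []) :
    (∀ x ∈ dualRec k l, 1 ≤ x) ∧ dualRec k l ≠ [] ∧
      word (dualRec k l) = word l ++ (List.map not (word k)).reverse := by
  rcases eq_or_ne k [] with rfl | hkne
  · rw [dualRec_nil]
    exact ⟨hl, hlne, by simp [word_nil]⟩
  have hglk : 1 ≤ k.getLast! := hk _ (getLast!_mem k hkne)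
  by_cases h2 : 2 ≤ k.getLast!
  · rw [dualRec_cons_big k l hkne h2]
    have hk' : ∀ x ∈ lastDec k, 1 ≤ x := by
      intro a ha
      rw [lastDec_eq] at ha
      rcases List.mem_append.mp ha with ha | ha
      · exact hk _ (List.dropLast_subset _ ha)
      · simp only [List.mem_singleton] at ha; omega
    have hl' : ∀ x ∈ l ++ [1], 1 ≤ x := by
      intro a ha
      rcases List.mem_append.mp ha with ha | ha
      · exact hl _ ha
      · simp at ha; omega
    obtain ⟨p1, p2, p3⟩ := dualRec_word (lastDec k) (l ++ [1]) hk' hl' (by simp)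
    refine ⟨p1, p2, ?_⟩
    rw [p3, word_append_one, ← word_lastDec k hkne h2]
    simp [List.map_append, List.reverse_append, List.append_assoc]
  · have hg1 : k.getLast! = 1 := by omega
    rw [dualRec_cons_small k l hkne h2]
    have hk' : ∀ x ∈ k.dropLast, 1 ≤ x := fun a ha => hk _ (List.dropLast_subset _ ha)
    have hl' : ∀ x ∈ lastInc l, 1 ≤ x := by
      intro a ha
      rw [lastInc_eq] at ha
      rcases List.mem_append.mp ha with ha | ha
      · exact hl _ (List.dropLast_subset _ ha)
      · simp at ha; omega
    obtain ⟨p1, p2, p3⟩ := dualRec_word k.dropLast (lastInc l) hk' hl' (by simp [lastInc_eq])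
    refine ⟨p1, p2, ?_⟩
    rw [p3, word_lastInc l hlne hl, ← word_dropLast_one k hkne hg1]
    simp [List.map_append, List.reverse_append, List.append_assoc]
  termination_by k.sum + k.length
  decreasing_by
  · rw [lastDec_eq, List.sum_append, List.length_append]
    have := sum_decomp k hkne
    have h2' : k.dropLast.length + 1 = k.length := by
      rw [List.length_dropLast]; exact Nat.succ_pred_eq_of_pos (List.length_pos_iff.mpr hkne)
    simp only [List.sum_cons, List.sum_nil, List.length_cons, List.length_nil]
    omega
  · have := sum_decomp k hkne
    have h2' : k.dropLast.length + 1 = k.length := by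
      rw [List.length_dropLast]; exact Nat.succ_pred_eq_of_pos (List.length_pos_iff.mpr hkne)
    omega

lemma dagger_eq_dualRec (k : List ℕ) (hne : k ≠ []) (hpos : ∀ x ∈ k, 1 ≤ x)
    (h2 : 2 ≤ k.getLast!) : dagger k = dualRec k [] := by
  have hjne : lastDec k ≠ [] := by rw [lastDec_eq]; simp
  have hjpos : ∀ x ∈ lastDec k, 1 ≤ x := by
    intro a ha
    rw [lastDec_eq] at ha
    rcases List.mem_append.mp ha with ha | ha
    · exact hpos _ (List.dropLast_subset _ ha)
    · simp only [List.mem_singleton] at ha; omega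
  have hrec : dualRec k [] = dualRec (lastDec k) [1] := by
    rw [dualRec_cons_big k [] hne h2]
    rfl
  obtain ⟨hdrpos, hdrne, hdrw⟩ := dualRec_word (lastDec k) [1] hjpos (by simp) (by simp)
  obtain ⟨hhpos, hhsum, hhne, _⟩ := hdual_spec (lastDec k) hjne hjpos
  have hrevne : (hdual (lastDec k)).reverse ≠ [] := by simpa using hhne
  have hrevpos : ∀ x ∈ (hdual (lastDec k)).reverse, 1 ≤ x :=
    fun x hx => hhpos x (List.mem_reverse.mp hx)
  have hdagpos : ∀ x ∈ dagger k, 1 ≤ x := by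
    intro a ha
    rw [show dagger k = lastInc ((hdual (lastDec k)).reverse) from rfl, lastInc_eq] at ha
    rcases List.mem_append.mp ha with ha | ha
    · exact hrevpos _ (List.dropLast_subset _ ha)
    · simp at ha; omega
  rw [hrec]
  refine word_inj _ _ hdagpos hdrpos ?_
  have hw1 : word (dagger k) = word ((hdual (lastDec k)).reverse) ++ [true] :=
    word_lastInc _ hrevne hrevpos
  rw [hw1, word_reverse _ hhne, word_hdual (lastDec k) hjne hjpos, hdrw]
  have hwj : word (lastDec k) = false :: (word (lastDec k)).tail := by
    obtain ⟨y, t, hyt⟩ := List.exists_cons_of_ne_nil hjne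
    rw [hyt, word_cons]
    rfl
  have hM : List.map not (word (lastDec k)) = true :: List.map not ((word (lastDec k)).tail) := by
    conv_lhs => rw [hwj]
    rfl
  have htail : (List.map not (word (lastDec k))).tail = List.map not ((word (lastDec k)).tail) := by
    rw [hM]
    rfl
  rw [htail, hM, List.reverse_cons, word_singleton]
  simp
/-- Duality formula for multiple zeta values. -/
theorem duality_mzv (k : List ℕ) (hne : k ≠ []) (hpos : ∀ x ∈ k, 1 ≤ x)
    (hadm : 2 ≤ k.getLast hne) :
    mzv (dagger k) = mzv k := by
  have h2 : 2 ≤ k.getLast! := by rw [getLast!_eq k hne]; exact hadm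
  rw [dagger_eq_dualRec k hne hpos h2, mzv_eq_Z, mzv_eq_Z]
  congr 1
  calc Zfun (dualRec k []) [] = Zfun [] (dualRec k []) := Zfun_symm _ _
    _ = Zfun k [] := (mainT k [] hpos (by simp) (Or.inr (Or.inr h2))).symm
end

section
/- For every index k = (k_1,…,k_r) and every integer m ≥ 0, one has in the free ℚ-vector space I on indices: k ⧢ ({1}^m) = ∑_{i=0}^m ∑_e (k ⊕ e) ∗ ({1}^i), where the inner sum is over all sequences e of nonnegative integers with dep(e) = r and wt(e) = m − i, and {1}^j denotes the index consisting of j entries equal to 1. -/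
/-- The shuffle product on the free ℚ-vector space `I = (List ℕ →₀ ℚ)` on indices,
given on basis elements. -/
noncomputable def sh : List ℕ → List ℕ → (List ℕ →₀ ℚ)
  | [], l => Finsupp.single l 1
  | a :: k, [] => Finsupp.single (a :: k) 1
  | a :: k, b :: l =>
      Finsupp.mapDomain (a :: ·) (sh k (b :: l)) +
      Finsupp.mapDomain (b :: ·) (sh (a :: k) l)
  termination_by k l => k.length + l.length

/-- The harmonic product on the free ℚ-vector space `I = (List ℕ →₀ ℚ)` on indices,
given on basis elements. -/
noncomputable def harm : List ℕ → List ℕ → (List ℕ →₀ ℚ)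
  | [], l => Finsupp.single l 1
  | a :: k, [] => Finsupp.single (a :: k) 1
  | a :: k, b :: l =>
      Finsupp.mapDomain (a :: ·) (harm k (b :: l)) +
      Finsupp.mapDomain (b :: ·) (harm (a :: k) l) -
      Finsupp.mapDomain ((a + b) :: ·) (harm k l)
  termination_by k l => k.length + l.length



open Finset Finset.Nat

noncomputable def md (x : ℕ) (v : List ℕ →₀ ℚ) : List ℕ →₀ ℚ := Finsupp.mapDomain (x :: ·) v

noncomputable def KE (k : List ℕ) (e : Fin k.length → ℕ) : List ℕ :=
  List.ofFn fun j => k.get j + e j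

noncomputable def RHSsum (k : List ℕ) (m : ℕ) : List ℕ →₀ ℚ :=
  ∑ i ∈ range (m+1), ∑ e ∈ antidiagonalTuple k.length (m-i),
    harm (KE k e) (List.replicate i 1)

noncomputable def Ssum (a : ℕ) (k : List ℕ) (i n : ℕ) : List ℕ →₀ ℚ :=
  ∑ j ∈ range (n+1), ∑ e ∈ antidiagonalTuple k.length (n-j),
    harm ((a+j) :: KE k e) (List.replicate i 1)

noncomputable def Asum (a : ℕ) (k : List ℕ) (i n : ℕ) : List ℕ →₀ ℚ :=
  ∑ j ∈ range (n+1), ∑ e ∈ antidiagonalTuple k.length (n-j),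
    md (a+j) (harm (KE k e) (List.replicate i 1))

noncomputable def Csum (a : ℕ) (k : List ℕ) (i n : ℕ) : List ℕ →₀ ℚ :=
  ∑ j ∈ range (n+1), ∑ e ∈ antidiagonalTuple k.length (n-j),
    md (a+j+1) (harm (KE k e) (List.replicate i 1))

noncomputable def Jsum (a : ℕ) (k : List ℕ) (i n : ℕ) : List ℕ →₀ ℚ :=
  ∑ e ∈ antidiagonalTuple k.length n, md a (harm (KE k e) (List.replicate i 1))

lemma harm_nil_right (k : List ℕ) : harm k [] = Finsupp.single k 1 := by
  cases k <;> simp [harm]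

lemma harm_nil_left (l : List ℕ) : harm [] l = Finsupp.single l 1 := by simp [harm]

lemma sh_nil_right (k : List ℕ) : sh k [] = Finsupp.single k 1 := by
  cases k <;> simp [sh]

lemma sh_nil_left (l : List ℕ) : sh [] l = Finsupp.single l 1 := by simp [sh]

lemma sum_adT_succ {M : Type*} [AddCommMonoid M] (r n : ℕ) (G : (Fin (r+1) → ℕ) → M) :
    ∑ e ∈ antidiagonalTuple (r+1) n, G e
      = ∑ j ∈ range (n+1), ∑ e ∈ antidiagonalTuple r (n - j), G (Fin.cons j e) := by
  rw [Finset.sum_sigma']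
  refine Finset.sum_nbij' (fun e => ⟨e 0, Fin.tail e⟩) (fun p => Fin.cons p.1 p.2)
    ?_ ?_ ?_ ?_ ?_
  · intro e he
    rw [mem_antidiagonalTuple, Fin.sum_univ_succ] at he
    simp only [Finset.mem_sigma]
    refine ⟨Finset.mem_range.2 ?_, ?_⟩
    · omega
    · rw [mem_antidiagonalTuple]
      show (∑ i : Fin r, e i.succ) = n - e 0
      omega
  · rintro ⟨j, e⟩ he
    obtain ⟨hj, he⟩ := Finset.mem_sigma.1 he
    dsimp only at hj he
    rw [mem_antidiagonalTuple] at he ⊢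
    rw [Fin.sum_univ_succ]
    simp only [Fin.cons_zero, Fin.cons_succ]
    rw [Finset.mem_range] at hj
    omega
  · intro e _; exact Fin.cons_self_tail e
  · rintro ⟨j, e⟩ _
    simp [Fin.tail_cons]
  · intro e _; exact (congrArg G (Fin.cons_self_tail e)).symm

lemma KE_cons (a : ℕ) (k : List ℕ) (e : Fin (k.length + 1) → ℕ) :
    KE (a :: k) e = (a + e 0) :: KE k (fun j => e j.succ) := by
  simp [KE, List.ofFn_succ]

lemma RHS_cons (a : ℕ) (k : List ℕ) (M : ℕ) :
    RHSsum (a :: k) M = ∑ i ∈ range (M+1), Ssum a k i (M-i) := by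
  unfold RHSsum Ssum
  refine Finset.sum_congr rfl fun i _ => ?_
  simp only [List.length_cons]
  rw [sum_adT_succ k.length (M-i) (fun e => harm (KE (a :: k) e) (List.replicate i 1))]
  refine Finset.sum_congr rfl fun j _ => Finset.sum_congr rfl fun e _ => ?_
  rw [KE_cons]
  simp [Fin.cons_zero, Fin.cons_succ]

lemma harm_cons_succ (x : ℕ) (L : List ℕ) (i : ℕ) :
    harm (x :: L) (List.replicate (i+1) 1)
      = md x (harm L (List.replicate (i+1) 1)) + md 1 (harm (x :: L) (List.replicate i 1))
        - md (x+1) (harm L (List.replicate i 1)) := by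
  conv_lhs => rw [List.replicate_succ, harm]
  rw [← List.replicate_succ]
  rfl

lemma Ssum_succ (a : ℕ) (k : List ℕ) (i n : ℕ) :
    Ssum a k (i+1) n = Asum a k (i+1) n + md 1 (Ssum a k i n) - Csum a k i n := by
  unfold Ssum Asum Csum
  simp only [md, Finsupp.mapDomain_finset_sum]
  rw [← Finset.sum_add_distrib, ← Finset.sum_sub_distrib]
  refine Finset.sum_congr rfl fun j _ => ?_
  rw [← Finset.sum_add_distrib, ← Finset.sum_sub_distrib]
  refine Finset.sum_congr rfl fun e _ => ?_
  exact harm_cons_succ (a+j) (KE k e) i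

lemma Ssum_zero (a : ℕ) (k : List ℕ) (n : ℕ) :
    Ssum a k 0 n = Asum a k 0 n := by
  unfold Ssum Asum
  refine Finset.sum_congr rfl fun j _ => Finset.sum_congr rfl fun e _ => ?_
  simp [harm_nil_right, md, Finsupp.mapDomain_single]

lemma Asum_succ_n (a : ℕ) (k : List ℕ) (i n : ℕ) :
    Asum a k i (n+1) = Jsum a k i (n+1) + Csum a k i n := by
  unfold Asum Jsum Csum
  rw [Finset.sum_range_succ'
    (fun j => ∑ e ∈ antidiagonalTuple k.length (n+1-j),
      md (a+j) (harm (KE k e) (List.replicate i 1))) (n+1)]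
  simp only [Nat.succ_sub_succ, Nat.add_zero, Nat.sub_zero]
  rw [add_comm]
  congr 1

lemma Asum_zero_n (a : ℕ) (k : List ℕ) (i : ℕ) :
    Asum a k i 0 = Jsum a k i 0 := by
  unfold Asum Jsum
  rw [Finset.sum_range_one]
  simp

lemma Jsum_sum (a : ℕ) (k : List ℕ) (M : ℕ) :
    ∑ i ∈ range (M+1), Jsum a k i (M-i) = md a (RHSsum k M) := by
  unfold Jsum RHSsum
  simp only [md, Finsupp.mapDomain_finset_sum]

lemma main_rec (a : ℕ) (k : List ℕ) (M : ℕ) :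
    RHSsum (a :: k) (M+1) = md a (RHSsum k (M+1)) + md 1 (RHSsum (a :: k) M) := by
  rw [RHS_cons, RHS_cons, ← Jsum_sum a k (M+1)]
  rw [Finset.sum_range_succ' (fun i => Ssum a k i (M+1-i)) (M+1)]
  have key : ∀ i ∈ range (M+1),
      Ssum a k (i+1) (M+1-(i+1))
        = (Asum a k (i+1) (M+1-(i+1)) - Asum a k i (M+1-i))
          + md 1 (Ssum a k i (M-i)) + Jsum a k i (M+1-i) := by
    intro i hi
    rw [Finset.mem_range] at hi
    have h1 : M+1-(i+1) = M-i := by omega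
    have h2 : M+1-i = (M-i)+1 := by omega
    rw [h1, h2, Ssum_succ, Asum_succ_n]
    abel
  rw [Finset.sum_congr rfl key]
  rw [Finset.sum_add_distrib, Finset.sum_add_distrib,
    Finset.sum_range_sub (fun i => Asum a k i (M+1-i)) (M+1)]
  have hs : M+1-(M+1) = 0 := Nat.sub_self (M+1)
  rw [hs, Nat.sub_zero, Asum_zero_n, ← Ssum_zero]
  have hmd : ∑ i ∈ range (M+1), md 1 (Ssum a k i (M-i))
      = md 1 (∑ i ∈ range (M+1), Ssum a k i (M-i)) := by
    simp only [md, Finsupp.mapDomain_finset_sum]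
  rw [hmd, Finset.sum_range_succ (fun i => Jsum a k i (M+1-i)) (M+1), hs]
  abel

lemma RHS_zero (k : List ℕ) : RHSsum k 0 = Finsupp.single k 1 := by
  unfold RHSsum
  rw [Finset.sum_range_one]
  simp [Finset.Nat.antidiagonalTuple_zero_right, KE, harm_nil_right, List.ofFn_get]

lemma RHS_nil (m : ℕ) : RHSsum [] m = Finsupp.single (List.replicate m 1) 1 := by
  unfold RHSsum
  rw [Finset.sum_eq_single_of_mem m (Finset.self_mem_range_succ m)]
  · simp only [Nat.sub_self, List.length_nil]
    rw [Finset.Nat.antidiagonalTuple_zero_zero]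
    rw [Finset.sum_singleton]
    have : KE [] ![] = [] := by simp [KE]
    rw [this, harm_nil_left]
  · intro i hi hne
    rw [Finset.mem_range] at hi
    obtain ⟨n, hn⟩ : ∃ n, m - i = n + 1 := ⟨m - i - 1, by omega⟩
    simp only [List.length_nil, hn]
    rw [Finset.Nat.antidiagonalTuple_zero_succ, Finset.sum_empty]

lemma main_eq : ∀ (k : List ℕ) (m : ℕ), sh k (List.replicate m 1) = RHSsum k m := by
  intro k
  induction k with
  | nil => intro m; rw [RHS_nil, sh_nil_left]
  | cons a k ih =>
    intro m
    induction m with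
    | zero => rw [List.replicate_zero, sh_nil_right, RHS_zero]
    | succ m ihm =>
      rw [List.replicate_succ, sh, ← List.replicate_succ, ih, ihm]
      exact (main_rec a k m).symm

/-- `k ⧢ ({1}^m) = ∑_{i=0}^m ∑_{wt(e)=m-i, dep(e)=dep(k)} (k ⊕ e) ∗ ({1}^i)` in the free
ℚ-vector space on indices. -/
theorem sh_replicate_one_eq_sum_harm (k : List ℕ) (hpos : ∀ x ∈ k, 1 ≤ x) (m : ℕ) :
    sh k (List.replicate m 1)
    = ∑ i ∈ Finset.range (m + 1),
        ∑ e ∈ Finset.Nat.antidiagonalTuple k.length (m - i),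
          harm (List.ofFn fun j => k.get j + e j) (List.replicate i 1) := by
  exact main_eq k m
end

section
/- For all integers m, n, i ≥ 1 with i ≤ n, one has ∑_{a=0}^m (−1)^a · binom(m+n, a+i) · binom(a+i−1, a) · binom(m+n−a−i, m−a) = binom(m+n, m+i). -/
open Finset

lemma key_sum (j : ℕ) : ∀ m : ℕ, ∑ a ∈ Finset.range (m + 1),
    (-1 : ℤ) ^ a * ((m + j + 1).choose (a + j + 1) : ℤ) * ((a + j).choose a : ℤ) = 1 := by
  intro m
  induction m with
  | zero => simp
  | succ m ih =>
    have split : ∑ a ∈ Finset.range (m + 1 + 1),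
        (-1 : ℤ) ^ a * ((m + 1 + j + 1).choose (a + j + 1) : ℤ) * ((a + j).choose a : ℤ)
      = (∑ a ∈ Finset.range (m + 1 + 1),
          (-1 : ℤ) ^ a * ((m + j + 1).choose (a + j) : ℤ) * ((a + j).choose a : ℤ))
      + (∑ a ∈ Finset.range (m + 1 + 1),
          (-1 : ℤ) ^ a * ((m + j + 1).choose (a + j + 1) : ℤ) * ((a + j).choose a : ℤ)) := by
      rw [← Finset.sum_add_distrib]
      refine Finset.sum_congr rfl fun a _ => ?_
      have h : (m + j + 1 + 1).choose (a + j + 1) =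
          (m + j + 1).choose (a + j) + (m + j + 1).choose (a + j + 1) :=
        Nat.choose_succ_succ' (m + j + 1) (a + j)
      have h' : ((m + j + 1 + 1).choose (a + j + 1) : ℤ) =
          ((m + j + 1).choose (a + j) : ℤ) + ((m + j + 1).choose (a + j + 1) : ℤ) := by
        exact_mod_cast congrArg (Nat.cast : ℕ → ℤ) h
      have he : m + 1 + j + 1 = m + j + 1 + 1 := by omega
      rw [he]
      linear_combination ((-1:ℤ)^a * ((a + j).choose a : ℤ)) * h'
    rw [split]
    have hB : ∑ a ∈ Finset.range (m + 1 + 1),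
        (-1 : ℤ) ^ a * ((m + j + 1).choose (a + j + 1) : ℤ) * ((a + j).choose a : ℤ) = 1 := by
      have hz : (m + j + 1).choose (m + 1 + j + 1) = 0 :=
        Nat.choose_eq_zero_of_lt (by omega)
      rw [Finset.sum_range_succ, hz, ih]
      simp
    have hA : ∑ a ∈ Finset.range (m + 1 + 1),
        (-1 : ℤ) ^ a * ((m + j + 1).choose (a + j) : ℤ) * ((a + j).choose a : ℤ) = 0 := by
      have term : ∀ a ∈ Finset.range (m + 1 + 1),
          (-1 : ℤ) ^ a * ((m + j + 1).choose (a + j) : ℤ) * ((a + j).choose a : ℤ)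
          = ((m + j + 1).choose j : ℤ) * ((-1 : ℤ) ^ a * ((m + 1).choose a : ℤ)) := by
        intro a ha
        rw [Finset.mem_range] at ha
        have hsym : (a + j).choose a = (a + j).choose j := Nat.choose_symm_add
        have hmul : (m + j + 1).choose (a + j) * (a + j).choose j
            = (m + j + 1).choose j * (m + j + 1 - j).choose (a + j - j) :=
          Nat.choose_mul (by omega)
        have h1 : m + j + 1 - j = m + 1 := by omega
        have h2 : a + j - j = a := by omega
        rw [h1, h2] at hmul
        have hc : ((m + j + 1).choose (a + j) : ℤ) * ((a + j).choose j : ℤ)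
            = ((m + j + 1).choose j : ℤ) * ((m + 1).choose a : ℤ) := by
          exact_mod_cast congrArg (Nat.cast : ℕ → ℤ) hmul
        rw [hsym]
        linear_combination (-1:ℤ)^a * hc
      rw [Finset.sum_congr rfl term, ← Finset.mul_sum,
        Int.alternating_sum_range_choose_of_ne (Nat.succ_ne_zero m), mul_zero]
    rw [hA, hB]; ring

theorem binom_identity_one (m n i : ℕ) (hm : 1 ≤ m) (hn : 1 ≤ n) (hi : 1 ≤ i) (hin : i ≤ n) :
    ∑ a ∈ Finset.range (m + 1),
      (-1 : ℤ) ^ a * ((m + n).choose (a + i) : ℤ) * ((a + i - 1).choose a : ℤ)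
        * ((m + n - a - i).choose (m - a) : ℤ)
    = ((m + n).choose (m + i) : ℤ) := by
  obtain ⟨j, rfl⟩ : ∃ j, i = j + 1 := ⟨i - 1, by omega⟩
  simp only [show ∀ a : ℕ, a + (j + 1) = a + j + 1 from fun a => by omega,
    show m + (j + 1) = m + j + 1 from by omega]
  have term : ∀ a ∈ Finset.range (m + 1),
      (-1 : ℤ) ^ a * ((m + n).choose (a + j + 1) : ℤ) * ((a + j + 1 - 1).choose a : ℤ)
        * ((m + n - a - (j + 1)).choose (m - a) : ℤ)
      = ((m + n).choose (m + j + 1) : ℤ)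
        * ((-1 : ℤ) ^ a * ((m + j + 1).choose (a + j + 1) : ℤ) * ((a + j).choose a : ℤ)) := by
    intro a ha
    rw [Finset.mem_range] at ha
    have hmul : (m + n).choose (m + j + 1) * (m + j + 1).choose (a + j + 1)
        = (m + n).choose (a + j + 1) * ((m + n - (a + j + 1)).choose (m + j + 1 - (a + j + 1))) :=
      Nat.choose_mul (by omega)
    have h1 : m + n - (a + j + 1) = m + n - a - (j + 1) := by omega
    have h2 : m + j + 1 - (a + j + 1) = m - a := by omega
    have h3 : a + j + 1 - 1 = a + j := by omega
    rw [h1, h2] at hmul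
    have hc : ((m + n).choose (m + j + 1) : ℤ) * ((m + j + 1).choose (a + j + 1) : ℤ)
        = ((m + n).choose (a + j + 1) : ℤ) * ((m + n - a - (j + 1)).choose (m - a) : ℤ) := by
      exact_mod_cast congrArg (Nat.cast : ℕ → ℤ) hmul
    rw [h3]
    linear_combination (-(-1:ℤ)^a * ((a + j).choose a : ℤ)) * hc
  rw [Finset.sum_congr rfl term, ← Finset.mul_sum, key_sum j m, mul_one]
end

section
/- For every integer i ≥ 1 and all sufficiently large primes p, one has ∑_{1≤m_1≤m_2≤⋯≤m_i≤p−1} (m_1 m_2 ⋯ m_i)^{−1} = 0 in 𝔽_p; that is, the finite multiple zeta-star value ζ*_{<p}({1}^i) vanishes. -/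
open scoped Classical in
/-- The truncated multiple zeta-star value `ζ*_{<p}(k₁,…,k_r) = ∑_{1≤m₁≤⋯≤m_r≤p-1} ∏ mᵢ^{-kᵢ}`
computed in `𝔽_p`. -/
noncomputable def fmzvStar (p : ℕ) (k : List ℕ) : ZMod p :=
  ∑ n ∈ Finset.univ.filter
      (fun n : Fin k.length → Fin p => Monotone n ∧ ∀ i, 0 < (n i : ℕ)),
    ∏ i, (((n i : ℕ) : ZMod p) ^ k.get i)⁻¹

/-- Auxiliary sum over multisets of nonzero residues. -/
noncomputable def symSumAux (p : ℕ) [NeZero p] (i : ℕ) : ZMod p :=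
  ∑ s ∈ ((Finset.univ : Finset (ZMod p)).filter (· ≠ 0)).sym i,
    (Multiset.map (·⁻¹) (s : Multiset (ZMod p))).prod

open scoped Classical in
lemma fmzvStar_eq_symSumAux (p : ℕ) [NeZero p] (k : List ℕ)
    (hk : ∀ j, k.get j = 1) :
    fmzvStar p k = symSumAux p k.length := by
  unfold fmzvStar symSumAux
  refine Finset.sum_bij
    (fun n _ => Sym.mk (↑(List.ofFn fun j => ((n j : ℕ) : ZMod p)) : Multiset (ZMod p)) (by simp))
    ?_ ?_ ?_ ?_
  · rintro n hn
    simp only [Finset.mem_filter, Finset.mem_univ, true_and] at hn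
    rw [Finset.mem_sym_iff]
    intro a ha
    simp only [Sym.mem_mk, Multiset.mem_coe, List.mem_ofFn, Set.mem_range] at ha
    obtain ⟨j, rfl⟩ := ha
    simp only [Finset.mem_filter, Finset.mem_univ, true_and]
    intro h0
    have hdvd := (ZMod.natCast_eq_zero_iff _ _).mp h0
    have h1 := hn.2 j
    have h2 := (n j).isLt
    have := Nat.le_of_dvd h1 hdvd
    omega
  · rintro a ha b hb hab
    simp only [Finset.mem_filter, Finset.mem_univ, true_and] at ha hb
    rw [← Sym.coe_inj] at hab
    change ((List.ofFn fun j => ((a j : ℕ) : ZMod p)) : Multiset (ZMod p)) =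
      (List.ofFn fun j => ((b j : ℕ) : ZMod p)) at hab
    rw [Multiset.coe_eq_coe] at hab
    have hab' := hab.map ZMod.val
    rw [List.map_ofFn, List.map_ofFn] at hab'
    have hva : ∀ j, (ZMod.val ∘ fun j => ((a j : ℕ) : ZMod p)) j = (a j : ℕ) := by
      intro j; simp [Function.comp, ZMod.val_cast_of_lt (a j).isLt]
    have hvb : ∀ j, (ZMod.val ∘ fun j => ((b j : ℕ) : ZMod p)) j = (b j : ℕ) := by
      intro j; simp [Function.comp, ZMod.val_cast_of_lt (b j).isLt]
    rw [show (ZMod.val ∘ fun j => ((a j : ℕ) : ZMod p)) = fun j => ((a j : ℕ)) from funext hva,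
        show (ZMod.val ∘ fun j => ((b j : ℕ) : ZMod p)) = fun j => ((b j : ℕ)) from funext hvb]
      at hab'
    have hsa : (List.ofFn fun j => ((a j : ℕ))).Pairwise (· ≤ ·) :=
      List.pairwise_ofFn.mpr (fun x y hxy => ha.1 hxy.le)
    have hsb : (List.ofFn fun j => ((b j : ℕ))).Pairwise (· ≤ ·) :=
      List.pairwise_ofFn.mpr (fun x y hxy => hb.1 hxy.le)
    have := List.Perm.eq_of_pairwise' hsa hsb hab'
    rw [List.ofFn_inj] at this
    funext j
    exact Fin.ext (congrFun this j)
  · rintro m hs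
    rw [Finset.mem_sym_iff] at hs
    obtain ⟨s, hcard⟩ := m
    set t : Multiset ℕ := s.map ZMod.val with ht
    set l : List ℕ := t.sort (· ≤ ·) with hl
    have hlen : l.length = k.length := by
      rw [hl, Multiset.length_sort, ht, Multiset.card_map, hcard]
    have hmem : ∀ x ∈ l, x < p ∧ 0 < x := by
      intro x hx
      rw [hl, Multiset.mem_sort, ht, Multiset.mem_map] at hx
      obtain ⟨a, ha, rfl⟩ := hx
      have := hs a (by simpa using ha)
      simp only [Finset.mem_filter, Finset.mem_univ, true_and] at this
      exact ⟨ZMod.val_lt a, Nat.pos_of_ne_zero (fun h => this ((ZMod.val_eq_zero a).mp h))⟩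
    refine ⟨fun j => ⟨l.get (Fin.cast hlen.symm j), (hmem _ (l.get_mem _)).1⟩, ?_, ?_⟩
    · simp only [Finset.mem_filter, Finset.mem_univ, true_and]
      constructor
      · intro x y hxy
        exact Fin.mk_le_mk.mpr ((Multiset.pairwise_sort t (· ≤ ·)).rel_get_of_le
          (Fin.le_def.mpr (Fin.le_def.mp hxy)))
      · intro j
        exact (hmem _ (l.get_mem _)).2
    · apply Sym.coe_injective
      simp only
      show ((List.ofFn fun j => (((l.get (Fin.cast hlen.symm j) : ℕ)) : ZMod p)) : Multiset (ZMod p)) = s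
      rw [← List.ofFn_congr hlen (fun j : Fin l.length => ((l.get j : ℕ) : ZMod p))]
      simp only [List.get_eq_getElem]
      rw [List.ofFn_getElem_eq_map]
      show Multiset.map _ (↑(Multiset.sort t (· ≤ ·)) : Multiset ℕ) = s
      simp only [Multiset.sort_eq, ht, Multiset.map_map]
      simp [Function.comp_def, ZMod.natCast_zmod_val]
  · rintro n hn
    simp only [Sym.coe_mk, Multiset.map_coe, List.map_ofFn, Multiset.prod_coe,
      List.prod_ofFn, Function.comp_def, hk, pow_one]

lemma symSumAux_scale (p : ℕ) [Fact p.Prime] (i : ℕ) {c : ZMod p} (hc : c ≠ 0) :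
    symSumAux p i = c ^ i * symSumAux p i := by
  unfold symSumAux
  rw [Finset.mul_sum]
  refine Finset.sum_nbij' (fun s => s.map (c * ·)) (fun s => s.map (c⁻¹ * ·))
    ?_ ?_ ?_ ?_ ?_
  · intro a ha
    rw [Finset.mem_sym_iff] at ha ⊢
    intro x hx
    rw [Sym.mem_map] at hx
    obtain ⟨b, hb, rfl⟩ := hx
    have := ha b hb
    simp only [Finset.mem_filter, Finset.mem_univ, true_and] at this ⊢
    exact mul_ne_zero hc this
  · intro a ha
    rw [Finset.mem_sym_iff] at ha ⊢
    intro x hx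
    obtain ⟨b, hb, rfl⟩ := Sym.mem_map.mp hx
    have := ha b hb
    simp only [Finset.mem_filter, Finset.mem_univ, true_and] at this ⊢
    exact mul_ne_zero (inv_ne_zero hc) this
  · intro a _
    show Sym.map (fun x => c⁻¹ * x) (Sym.map (fun x => c * x) a) = a
    rw [Sym.map_map]
    have : ((c⁻¹ * ·) ∘ (c * ·)) = fun x : ZMod p => x := by
      funext x
      simp [← mul_assoc, inv_mul_cancel₀ hc]
    rw [this, Sym.map_id']
  · intro a _
    show Sym.map (fun x => c * x) (Sym.map (fun x => c⁻¹ * x) a) = a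
    rw [Sym.map_map]
    have : ((c * ·) ∘ (c⁻¹ * ·)) = fun x : ZMod p => x := by
      funext x
      simp [← mul_assoc, mul_inv_cancel₀ hc]
    rw [this, Sym.map_id']
  · intro a ha
    rw [Sym.coe_map, Multiset.map_map]
    have hcard : Multiset.card (a : Multiset (ZMod p)) = i := a.2
    have : ((fun x : ZMod p => x⁻¹) ∘ (c * ·)) = fun x : ZMod p => c⁻¹ * x⁻¹ := by
      funext x; simp [mul_inv_rev, mul_comm]
    rw [this]
    have := Multiset.prod_map_mul (m := (a : Multiset (ZMod p)))
      (f := fun _ => c⁻¹) (g := fun x => x⁻¹)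
    rw [this, Multiset.map_const', Multiset.prod_replicate, hcard]
    rw [← mul_assoc, ← mul_pow, mul_inv_cancel₀ hc, one_pow, one_mul]

/-- `ζ*_{<p}({1}^i) = 0` for all large primes `p`. -/
theorem fmzvStar_replicate_one (i : ℕ) (hi : 1 ≤ i) :
    ∀ᶠ p in Filter.atTop, p.Prime →
      fmzvStar p (List.replicate i 1) = 0 := by
  rw [Filter.eventually_atTop]
  refine ⟨i + 2, fun p hp hprime => ?_⟩
  haveI : Fact p.Prime := ⟨hprime⟩
  have h1 : fmzvStar p (List.replicate i 1) = symSumAux p i := by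
    rw [fmzvStar_eq_symSumAux p (List.replicate i 1) (fun j => by simp),
      List.length_replicate]
  obtain ⟨g, hg⟩ := IsCyclic.exists_generator (α := (ZMod p)ˣ)
  have horder : orderOf g = p - 1 := by
    rw [orderOf_eq_card_of_forall_mem_zpowers hg, Nat.card_eq_fintype_card, ZMod.card_units]
  have hne : ((g : ZMod p)) ^ i ≠ 1 := by
    intro h
    have hu : g ^ i = 1 := Units.ext (by push_cast; exact h)
    have hdvd := orderOf_dvd_of_pow_eq_one hu
    rw [horder] at hdvd
    have := Nat.le_of_dvd (by omega) hdvd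
    omega
  have hscale := symSumAux_scale p i (c := (g : ZMod p)) (Units.ne_zero g)
  have hzero : ((g : ZMod p) ^ i - 1) * symSumAux p i = 0 := by
    rw [sub_mul, one_mul, ← hscale, sub_self]
  rcases mul_eq_zero.mp hzero with h | h
  · exact absurd (sub_eq_zero.mp h) hne
  · rw [h1, h]
end
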